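/- arXiv:1606.07236 — 2 statements merged into one kernel-verified Lean document; each statement's English description precedes it below -/
import Mathlib

section
/- For every bipartite connected graph G, the vertex-PI index satisfies PI_v(G) = |V(G)| · |E(G)|. -/
open Finset SimpleGraph
open scoped Classical

noncomputable def eDist {V : Type*} (G : SimpleGraph V) (x : V) (f : Sym2 V) : ℕ :=
  Sym2.lift ⟨fun a b => min (G.dist x a) (G.dist x b), fun _ _ => min_comm _ _⟩ f

noncomputable def nSet {V : Type*} [Fintype V] (G : SimpleGraph V) (u v : V) : Finset V :=
  Finset.univ.filter (fun x => G.dist x u < G.dist x v)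

noncomputable def mSet {V : Type*} [Fintype V] (G : SimpleGraph V) (u v : V) : Finset (Sym2 V) :=
  G.edgeFinset.filter (fun f => eDist G u f < eDist G v f)

lemma walk_parity {V : Type*} {G : SimpleGraph V} (c : G.Coloring (Fin 2))
    {a b : V} (p : G.Walk a b) : (c a = c b ↔ Even p.length) := by
  induction p with
  | nil => simp
  | @cons x y z h p ih =>
    have hxy : c x ≠ c y := c.valid h
    simp only [SimpleGraph.Walk.length_cons, Nat.even_add_one]
    constructor
    · intro hxz
      intro he
      exact hxy (hxz.trans (ih.mpr he).symm)
    · intro hne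
      have : ¬ (c y = c z) := fun h' => hne (ih.mp h')
      -- Fin 2: c x ≠ c y, c y ≠ c z ⟹ c x = c z
      revert hxy this
      generalize c x = α; generalize c y = β; generalize c z = γ
      revert α β γ; decide

lemma dist_ne {V : Type*} {G : SimpleGraph V} (hconn : G.Connected)
    (c : G.Coloring (Fin 2)) {u v : V} (h : G.Adj u v) (x : V) :
    G.dist x u ≠ G.dist x v := by
  intro heq
  obtain ⟨p, hp⟩ := hconn.exists_walk_length_eq_dist x u
  obtain ⟨q, hq⟩ := hconn.exists_walk_length_eq_dist x v
  have h1 := walk_parity c p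
  have h2 := walk_parity c q
  rw [hp] at h1; rw [hq] at h2; rw [heq] at h1
  have huv : c u ≠ c v := c.valid h
  have : (c x = c u) ↔ (c x = c v) := h1.trans h2.symm
  revert huv this
  generalize c x = α; generalize c u = β; generalize c v = γ
  revert α β γ; decide

/-- For every bipartite connected graph G, PI_v(G) = |V(G)| · |E(G)|. -/
theorem stmt0 {V : Type*} [Fintype V] (G : SimpleGraph V)
    (hconn : G.Connected) (hbip : G.Colorable 2) :
    ∑ e ∈ G.edgeFinset,
      Sym2.lift ⟨fun u v => (nSet G u v).card + (nSet G v u).card,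
        fun _ _ => add_comm _ _⟩ e
      = Fintype.card V * G.edgeFinset.card := by
  obtain ⟨c⟩ := hbip
  have key : ∀ e ∈ G.edgeFinset,
      Sym2.lift ⟨fun u v => (nSet G u v).card + (nSet G v u).card,
        fun _ _ => add_comm _ _⟩ e = Fintype.card V := by
    intro e he
    induction e using Sym2.ind with
    | _ u v =>
      have hadj : G.Adj u v := by
        rwa [mem_edgeFinset, mem_edgeSet] at he
      simp only [Sym2.lift_mk]
      have hne := dist_ne hconn c hadj
      have : nSet G v u = Finset.univ.filter (fun x => ¬ G.dist x u < G.dist x v) := by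
        apply Finset.filter_congr
        intro x _
        constructor
        · intro h; omega
        · intro h
          have := hne x; omega
      rw [this, nSet]
      rw [Finset.card_filter_add_card_filter_not]
      exact (Finset.card_univ)
  rw [Finset.sum_congr rfl key, Finset.sum_const, smul_eq_mul, mul_comm]
end

section
/- For an edge-weighted bipartite connected graph (G, w'), the weighted PI index satisfies PI_e(G, w') ≤ m(G)² − Σ_{e ∈ E(G)} w'(e)², with equality if and only if for every edge e = uv, every edge f ≠ e of G satisfies d(f,u) ≠ d(f,v). -/
open Finset SimpleGraph
open scoped Classical

section Aux
variable {V : Type*} [Fintype V] (G : SimpleGraph V)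

lemma eDist_edge_left (u v : V) : eDist G u s(u,v) = 0 := by
  simp [eDist]

lemma eDist_edge_right (u v : V) : eDist G v s(u,v) = 0 := by
  simp [eDist]

lemma mSet_disj (u v : V) : Disjoint (mSet G u v) (mSet G v u) := by
  simp only [Finset.disjoint_left, mSet, mem_filter]
  rintro f ⟨_, h1⟩ ⟨_, h2⟩
  exact absurd h2 (not_lt.2 h1.le)

lemma mem_union_iff (u v : V) (f : Sym2 V) :
    f ∈ mSet G u v ∪ mSet G v u ↔ f ∈ G.edgeFinset ∧ eDist G u f ≠ eDist G v f := by
  simp only [mSet, mem_union, mem_filter, ne_iff_lt_or_gt, gt_iff_lt]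
  tauto

lemma union_subset_erase (u v : V) :
    mSet G u v ∪ mSet G v u ⊆ G.edgeFinset.erase s(u,v) := by
  intro f hf
  rw [mem_union_iff] at hf
  rw [mem_erase]
  refine ⟨?_, hf.1⟩
  rintro rfl
  exact hf.2 (by rw [eDist_edge_left, eDist_edge_right])

lemma per_edge (w' : Sym2 V → ℝ) (hw' : ∀ f ∈ G.edgeFinset, 0 < w' f) (u v : V) :
    ((∑ f ∈ mSet G u v, w' f) + ∑ f ∈ mSet G v u, w' f
       ≤ ∑ f ∈ G.edgeFinset.erase s(u,v), w' f) ∧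
    ((∑ f ∈ mSet G u v, w' f) + ∑ f ∈ mSet G v u, w' f
       = ∑ f ∈ G.edgeFinset.erase s(u,v), w' f
      ↔ ∀ f ∈ G.edgeFinset, f ≠ s(u,v) → eDist G u f ≠ eDist G v f) := by
  rw [← Finset.sum_union (mSet_disj G u v)]
  have hsub := union_subset_erase G u v
  have hsplit := Finset.sum_sdiff (f := w') hsub
  have hle : (∑ f ∈ mSet G u v ∪ mSet G v u, w' f)
      ≤ ∑ f ∈ G.edgeFinset.erase s(u,v), w' f := by
    refine Finset.sum_le_sum_of_subset_of_nonneg hsub fun f hf _ => (hw' f (mem_of_mem_erase hf)).le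
  refine ⟨hle, ?_, ?_⟩
  · intro heq f hf hne
    intro hcontra
    have hfmem : f ∈ G.edgeFinset.erase s(u,v) \ (mSet G u v ∪ mSet G v u) := by
      rw [mem_sdiff, mem_erase, mem_union_iff]
      exact ⟨⟨hne, hf⟩, by simp [hcontra]⟩
    have hnonneg : ∀ g ∈ G.edgeFinset.erase s(u,v) \ (mSet G u v ∪ mSet G v u), 0 ≤ w' g :=
      fun g hg => (hw' g (mem_of_mem_erase (mem_sdiff.1 hg).1)).le
    have hpos := Finset.single_le_sum hnonneg hfmem
    have : (∑ f ∈ G.edgeFinset.erase s(u,v) \ (mSet G u v ∪ mSet G v u), w' f) = 0 := by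
      linarith [hsplit, heq]
    have := hw' f hf
    linarith
  · intro hcond
    have hsub2 : G.edgeFinset.erase s(u,v) ⊆ mSet G u v ∪ mSet G v u := by
      intro f hf
      rw [mem_erase] at hf
      rw [mem_union_iff]
      exact ⟨hf.2, hcond f hf.2 hf.1⟩
    rw [Finset.Subset.antisymm hsub hsub2]

end Aux

/-- For an edge-weighted bipartite connected graph, PI_e(G,w') ≤ m(G)² − Σ_e w'(e)²,
with equality iff for every edge e = uv every edge f ≠ e satisfies d(f,u) ≠ d(f,v). -/
theorem stmt11 {V : Type*} [Fintype V] (G : SimpleGraph V)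
    (hconn : G.Connected) (hbip : G.Colorable 2)
    (w' : Sym2 V → ℝ) (hw' : ∀ f ∈ G.edgeFinset, 0 < w' f) :
    (∑ e ∈ G.edgeFinset, w' e *
        Sym2.lift ⟨fun a b => (∑ f ∈ mSet G a b, w' f) + ∑ f ∈ mSet G b a, w' f,
          fun _ _ => add_comm _ _⟩ e)
      ≤ (∑ e ∈ G.edgeFinset, w' e) ^ 2 - ∑ e ∈ G.edgeFinset, (w' e) ^ 2 ∧
    ((∑ e ∈ G.edgeFinset, w' e *
        Sym2.lift ⟨fun a b => (∑ f ∈ mSet G a b, w' f) + ∑ f ∈ mSet G b a, w' f,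
          fun _ _ => add_comm _ _⟩ e)
      = (∑ e ∈ G.edgeFinset, w' e) ^ 2 - ∑ e ∈ G.edgeFinset, (w' e) ^ 2
      ↔ ∀ u v : V, G.Adj u v → ∀ f ∈ G.edgeFinset, f ≠ s(u,v) →
          eDist G u f ≠ eDist G v f) := by
  set F : Sym2 V → ℝ := fun e =>
    Sym2.lift ⟨fun a b => (∑ f ∈ mSet G a b, w' f) + ∑ f ∈ mSet G b a, w' f,
      fun _ _ => add_comm _ _⟩ e with hF
  set B : Sym2 V → ℝ := fun e => ∑ f ∈ G.edgeFinset.erase e, w' f with hB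
  have hFB : ∀ e, F e ≤ B e := by
    intro e
    induction e using Sym2.ind with
    | _ u v =>
      simpa [F, B] using (per_edge G w' hw' u v).1
  have hterm : ∀ e ∈ G.edgeFinset, w' e * F e ≤ w' e * B e := fun e he =>
    mul_le_mul_of_nonneg_left (hFB e) (hw' e he).le
  have hRHS : (∑ e ∈ G.edgeFinset, w' e * B e)
      = (∑ e ∈ G.edgeFinset, w' e) ^ 2 - ∑ e ∈ G.edgeFinset, (w' e) ^ 2 := by
    have h1 : ∀ e ∈ G.edgeFinset, w' e * B e
        = w' e * (∑ f ∈ G.edgeFinset, w' f) - (w' e)^2 := by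
      intro e he
      rw [hB]
      simp only
      rw [Finset.sum_erase_eq_sub he]
      ring
    rw [Finset.sum_congr rfl h1, Finset.sum_sub_distrib, ← Finset.sum_mul, sq]
  constructor
  · calc (∑ e ∈ G.edgeFinset, w' e * F e) ≤ ∑ e ∈ G.edgeFinset, w' e * B e :=
          Finset.sum_le_sum hterm
      _ = _ := hRHS
  · rw [← hRHS]
    rw [Finset.sum_eq_sum_iff_of_le hterm]
    constructor
    · intro h u v huv f hf hne
      have he : s(u,v) ∈ G.edgeFinset := by rwa [mem_edgeFinset, mem_edgeSet]
      have := h s(u,v) he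
      have hFeq : F s(u,v) = B s(u,v) := mul_left_cancel₀ (hw' _ he).ne' this
      have : (∑ f ∈ mSet G u v, w' f) + ∑ f ∈ mSet G v u, w' f
          = ∑ f ∈ G.edgeFinset.erase s(u,v), w' f := by simpa [F, B] using hFeq
      exact ((per_edge G w' hw' u v).2.mp this) f hf hne
    · intro h e he
      induction e using Sym2.ind with
      | _ u v =>
        have huv : G.Adj u v := by rwa [mem_edgeFinset, mem_edgeSet] at he
        have : (∑ f ∈ mSet G u v, w' f) + ∑ f ∈ mSet G v u, w' f
            = ∑ f ∈ G.edgeFinset.erase s(u,v), w' f :=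
          (per_edge G w' hw' u v).2.mpr (h u v huv)
        simp only [F, B, Sym2.lift_mk]
        rw [this]
end
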